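/- arXiv:2412.01732 — 2 statements merged into one kernel-verified Lean document; each statement's English description precedes it below -/
import Mathlib

section
/- The quantum Wasserstein-1 distance of order one between two states on an n-fold tensor product, with respect to the Lipschitz norm ‖H‖_L := 2·max_i min_{H̃ on the complement of site i} ‖H − Id_i ⊗ H̃‖_∞, satisfies (1/2)‖ρ − σ‖₁ ≤ ‖ρ − σ‖_{W₁} ≤ n·‖ρ − σ‖₁ for all states ρ, σ. -/
open scoped BigOperators Matrix Classical ComplexOrder

noncomputable section

namespace Paper

variable {n : Type*} [Fintype n] [DecidableEq n]

/-- Operator (spectral) norm of a matrix, via the Euclidean operator norm. -/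
def opNorm (A : Matrix n n ℂ) : ℝ :=
  ‖LinearMap.toContinuousLinearMap (Matrix.toEuclideanLin A)‖

/-- Functional calculus on Hermitian matrices (returns `0` on non-Hermitian input). -/
def matFun (f : ℝ → ℝ) (A : Matrix n n ℂ) : Matrix n n ℂ :=
  if h : A.IsHermitian then
    (h.eigenvectorUnitary : Matrix n n ℂ) *
      Matrix.diagonal (fun i => (f (h.eigenvalues i) : ℂ)) *
      (star h.eigenvectorUnitary : Matrix n n ℂ)
  else 0

/-- Matrix logarithm (spectral). -/
def matLog (A : Matrix n n ℂ) : Matrix n n ℂ := matFun Real.log A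

/-- Matrix exponential (spectral, for Hermitian matrices). -/
def matExp (A : Matrix n n ℂ) : Matrix n n ℂ := matFun Real.exp A

/-- Trace norm (of a Hermitian matrix: the sum of absolute values of eigenvalues). -/
def traceNorm (A : Matrix n n ℂ) : ℝ :=
  if h : A.IsHermitian then ∑ i, |h.eigenvalues i| else 0

/-- Umegaki relative entropy `D(ρ‖σ) = Tr[ρ(log ρ − log σ)]`. -/
def relEnt (ρ σ : Matrix n n ℂ) : ℝ :=
  (Matrix.trace (ρ * (matLog ρ - matLog σ))).re

/-- von Neumann entropy. -/
def vnEnt (ρ : Matrix n n ℂ) : ℝ := -(Matrix.trace (ρ * matLog ρ)).re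

/-- A quantum state: positive semidefinite with unit trace. -/
def IsState (ρ : Matrix n n ℂ) : Prop := ρ.PosSemidef ∧ ρ.trace = 1

/-- Entropy production of a generator `L` with respect to the reference state `σ`. -/
def entProd (L : Matrix n n ℂ → Matrix n n ℂ) (σ ρ : Matrix n n ℂ) : ℝ :=
  -(Matrix.trace (L ρ * (matLog ρ - matLog σ))).re

end Paper
namespace Paper

variable {ι : Type*} [Fintype ι] [DecidableEq ι] {d : ι → Type*}
  [∀ i, Fintype (d i)] [∀ i, DecidableEq (d i)]

/-- Embedding `Id_i ⊗ H̃` of an operator `H̃` on the complement of the site `i` into the full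
multipartite space. -/
def embedAt (i : ι) (M : Matrix (∀ j : {j : ι // j ≠ i}, d j.1) (∀ j : {j : ι // j ≠ i}, d j.1) ℂ) :
    Matrix (∀ j, d j) (∀ j, d j) ℂ :=
  fun x y => if x i = y i then M (fun j => x j.1) (fun j => y j.1) else 0

/-- The Lipschitz norm `‖H‖_L = 2 maxᵢ min_{H̃} ‖H − Id_i ⊗ H̃‖_∞` on a multipartite space. -/
def lipNorm (H : Matrix (∀ j, d j) (∀ j, d j) ℂ) : ℝ :=
  2 * ⨆ i : ι, ⨅ M : Matrix (∀ j : {j : ι // j ≠ i}, d j.1) (∀ j : {j : ι // j ≠ i}, d j.1) ℂ,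
    opNorm (H - embedAt i M)

/-- The quantum Wasserstein norm of order 1:
`‖X‖_{W₁} = max{Tr[H X] : H self-adjoint, ‖H‖_L ≤ 1}`. -/
def w1Norm (X : Matrix (∀ j, d j) (∀ j, d j) ℂ) : ℝ :=
  sSup {r : ℝ | ∃ H : Matrix (∀ j, d j) (∀ j, d j) ℂ,
    H.IsHermitian ∧ lipNorm H ≤ 1 ∧ r = (Matrix.trace (H * X)).re}

/-- Partial trace over the sites in `J`, giving an operator on the complementary sites. -/
def ptraceSet (J : Finset ι) (X : Matrix (∀ j, d j) (∀ j, d j) ℂ) :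
    Matrix (∀ j : {j : ι // j ∉ J}, d j.1) (∀ j : {j : ι // j ∉ J}, d j.1) ℂ :=
  fun x y => ∑ z : ∀ j : {j : ι // j ∈ J}, d j.1,
    X (fun j => if h : j ∈ J then z ⟨j, h⟩ else x ⟨j, h⟩)
      (fun j => if h : j ∈ J then z ⟨j, h⟩ else y ⟨j, h⟩)

end Paper

namespace Paper
set_option maxRecDepth 8000
set_option linter.unusedSectionVars false

section GenMat
variable {n : Type*} [Fintype n] [DecidableEq n]

section Aux
open scoped Matrix.Norms.L2Operator

lemma opNorm_eq (A : Matrix n n ℂ) : opNorm A = ‖A‖ := rfl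

lemma opNorm_zero : opNorm (0 : Matrix n n ℂ) = 0 := by
  rw [opNorm_eq]; exact norm_zero

lemma opNorm_nonneg' (A : Matrix n n ℂ) : 0 ≤ opNorm A := by
  rw [opNorm_eq]; exact norm_nonneg _

lemma opNorm_smul (c : ℂ) (A : Matrix n n ℂ) : opNorm (c • A) = ‖c‖ * opNorm A := by
  rw [opNorm_eq, opNorm_eq, norm_smul]


/-- Quadratic-form bound. -/
lemma quad_le (A : Matrix n n ℂ) (v : n → ℂ) :
    ‖star v ⬝ᵥ (A *ᵥ v)‖ ≤ ‖A‖ * ∑ x, ‖v x‖ ^ 2 := by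
  classical
  set w : EuclideanSpace ℂ n := (WithLp.equiv 2 (n → ℂ)).symm v with hw
  have h1 : star v ⬝ᵥ (A *ᵥ v) = inner (𝕜 := ℂ) w ((WithLp.equiv 2 (n → ℂ)).symm (A *ᵥ v)) := by
    rw [EuclideanSpace.inner_eq_star_dotProduct, dotProduct_comm]; rfl
  have h2 : ((WithLp.equiv 2 (n → ℂ)).symm (A *ᵥ v) : EuclideanSpace ℂ n)
      = (Matrix.toEuclideanLin A).toContinuousLinearMap w := by
    rw [hw]; rfl
  have h3 : ‖w‖ ^ 2 = ∑ x, ‖v x‖ ^ 2 := by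
    rw [EuclideanSpace.norm_eq, Real.sq_sqrt (by positivity)]
    rfl
  rw [h1, h2]
  calc ‖(inner ℂ w ((Matrix.toEuclideanLin A).toContinuousLinearMap w) : ℂ)‖
      ≤ ‖w‖ * ‖(Matrix.toEuclideanLin A).toContinuousLinearMap w‖ := norm_inner_le_norm _ _
    _ ≤ ‖w‖ * (‖A‖ * ‖w‖) := by
        gcongr
        exact ((Matrix.toEuclideanLin A).toContinuousLinearMap).le_opNorm w
    _ = ‖A‖ * ‖w‖ ^ 2 := by ring
    _ = ‖A‖ * ∑ x, ‖v x‖ ^ 2 := by rw [h3]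

lemma norm_diagonal_le (g : n → ℂ) {r : ℝ} (hr : 0 ≤ r) (h : ∀ i, ‖g i‖ ≤ r) :
    ‖(Matrix.diagonal g : Matrix n n ℂ)‖ ≤ r := by
  rw [Matrix.l2_opNorm_def]
  refine ContinuousLinearMap.opNorm_le_bound _ hr fun x => ?_
  have hx : (LinearEquiv.trans (Matrix.toEuclideanLin (𝕜 := ℂ) (m := n) (n := n))
        LinearMap.toContinuousLinearMap (Matrix.diagonal g)) x
      = (WithLp.equiv 2 (n → ℂ)).symm ((Matrix.diagonal g) *ᵥ (WithLp.equiv 2 (n → ℂ)) x) := rfl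
  rw [hx]
  rw [EuclideanSpace.norm_eq, EuclideanSpace.norm_eq]
  have : r * Real.sqrt (∑ i, ‖x i‖ ^ 2) = Real.sqrt (r ^ 2 * ∑ i, ‖x i‖ ^ 2) := by
    rw [Real.sqrt_mul (by positivity), Real.sqrt_sq hr]
  rw [this]
  apply Real.sqrt_le_sqrt
  rw [Finset.mul_sum]
  apply Finset.sum_le_sum
  intro i _
  have : ((WithLp.equiv 2 (n → ℂ)).symm ((Matrix.diagonal g) *ᵥ (WithLp.equiv 2 (n → ℂ)) x) :
      EuclideanSpace ℂ n) i = g i * x i := by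
    simp [Matrix.mulVec_diagonal]
  rw [this, norm_mul, mul_pow]
  have h2 : ‖g i‖ ^ 2 ≤ r ^ 2 := by
    apply pow_le_pow_left₀ (norm_nonneg _) (h i)
  nlinarith [sq_nonneg ‖x i‖, norm_nonneg (x i)]

end Aux

section Aux2
open scoped Matrix.Norms.L2Operator
lemma herm_norm_le {A : Matrix n n ℂ} (hA : A.IsHermitian) {r : ℝ} (hr : 0 ≤ r)
    (h : ∀ v : n → ℂ, ∑ x, ‖v x‖ ^ 2 ≤ 1 → ‖star v ⬝ᵥ (A *ᵥ v)‖ ≤ r) : ‖A‖ ≤ r := by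
  classical
  have heig : ∀ j, |hA.eigenvalues j| ≤ r := by
    intro j
    set v : n → ℂ := (WithLp.equiv 2 (n → ℂ)) (hA.eigenvectorBasis j) with hv
    have hb1 : ‖hA.eigenvectorBasis j‖ = 1 := hA.eigenvectorBasis.orthonormal.1 j
    have hsum : ∑ x, ‖v x‖ ^ 2 = 1 := by
      have h0 : Real.sqrt (∑ x, ‖hA.eigenvectorBasis j x‖ ^ 2) = 1 := by
        rw [← EuclideanSpace.norm_eq]; exact hb1
      rwa [Real.sqrt_eq_one] at h0
    have hAv : A *ᵥ v = hA.eigenvalues j • v := hA.mulVec_eigenvectorBasis j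
    have hdot : star v ⬝ᵥ v = 1 := by
      have h1 : (inner (𝕜 := ℂ) (hA.eigenvectorBasis j) (hA.eigenvectorBasis j))
          = star v ⬝ᵥ v := by rw [EuclideanSpace.inner_eq_star_dotProduct, dotProduct_comm]; rfl
      rw [← h1, inner_self_eq_norm_sq_to_K, hb1]; norm_num
    have hq : star v ⬝ᵥ (A *ᵥ v) = (hA.eigenvalues j : ℂ) := by
      rw [hAv, dotProduct_smul, hdot]
      simp [Complex.real_smul]
    have := h v (le_of_eq hsum)
    rw [hq] at this
    simpa using this
  conv_lhs => rw [hA.spectral_theorem, Unitary.conjStarAlgAut_apply]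
  rw [← Unitary.coe_star, CStarRing.norm_mul_coe_unitary, CStarRing.norm_coe_unitary_mul]
  exact norm_diagonal_le _ hr (by
    intro i
    simpa using heig i)

lemma col_sum_one {U : Matrix n n ℂ} (hU : star U * U = 1) (j : n) :
    ∑ x, ‖U x j‖ ^ 2 = 1 := by
  have h1 : (star U * U) j j = 1 := by rw [hU]; simp
  have h2 : ∑ x, (starRingEnd ℂ) (U x j) * U x j = 1 := by
    rw [Matrix.mul_apply] at h1
    simp only [Matrix.star_apply, RCLike.star_def] at h1
    exact h1
  have h3 : ∀ z : ℂ, ((starRingEnd ℂ) z * z).re = ‖z‖ ^ 2 := by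
    intro z
    rw [mul_comm, Complex.mul_conj, Complex.ofReal_re,
      Complex.normSq_eq_norm_sq]
  calc ∑ x, ‖U x j‖ ^ 2 = ∑ x, ((starRingEnd ℂ) (U x j) * U x j).re := by
        simp [h3]
    _ = ((∑ x, (starRingEnd ℂ) (U x j) * U x j)).re := by rw [Complex.re_sum]
    _ = 1 := by rw [h2]; simp

lemma trace_mul_herm_le (A : Matrix n n ℂ) {B : Matrix n n ℂ} (hB : B.IsHermitian) :
    |(Matrix.trace (A * B)).re| ≤ ‖A‖ * traceNorm B := by
  classical
  set U : Matrix n n ℂ := (hB.eigenvectorUnitary : Matrix n n ℂ) with hUdef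
  have hUU : star U * U = 1 := Matrix.mem_unitaryGroup_iff'.mp hB.eigenvectorUnitary.2
  set lam := hB.eigenvalues with hlam
  have htr : Matrix.trace (A * B) = ∑ j, (star U * A * U) j j * (lam j : ℂ) := by
    conv_lhs => rw [hB.spectral_theorem, Unitary.conjStarAlgAut_apply]
    have h1 : A * (U * Matrix.diagonal (RCLike.ofReal ∘ lam) * star U)
        = (A * U * Matrix.diagonal (RCLike.ofReal ∘ lam)) * star U := by
      simp [Matrix.mul_assoc]
    rw [h1, Matrix.trace_mul_comm]
    have h2 : star U * (A * U * Matrix.diagonal (RCLike.ofReal ∘ lam))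
        = (star U * A * U) * Matrix.diagonal (RCLike.ofReal ∘ lam) := by
      simp [Matrix.mul_assoc]
    rw [h2]
    rw [Matrix.trace]
    congr 1
    ext j
    simp [Matrix.diag, Matrix.mul_diagonal]
  have hM : ∀ j, (star U * A * U) j j = star (fun x => U x j) ⬝ᵥ (A *ᵥ (fun x => U x j)) := by
    intro j
    simp only [Matrix.mul_apply, dotProduct, Matrix.mulVec, Matrix.star_eq_conjTranspose,
      Matrix.conjTranspose_apply, Pi.star_apply, Finset.sum_mul, Finset.mul_sum]
    rw [Finset.sum_comm]
    apply Finset.sum_congr rfl; intro x _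
    apply Finset.sum_congr rfl; intro y _
    ring
  have hbound : ∀ j, ‖(star U * A * U) j j‖ ≤ ‖A‖ := by
    intro j
    rw [hM j]
    calc ‖star (fun x => U x j) ⬝ᵥ (A *ᵥ (fun x => U x j))‖
        ≤ ‖A‖ * ∑ x, ‖U x j‖ ^ 2 := quad_le A _
      _ = ‖A‖ := by rw [col_sum_one hUU j, mul_one]
  have htn : traceNorm B = ∑ j, |lam j| := by
    rw [traceNorm, dif_pos hB]
  rw [htr, htn, Complex.re_sum, Finset.mul_sum]
  calc |∑ j, ((star U * A * U) j j * (lam j : ℂ)).re|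
      ≤ ∑ j, |((star U * A * U) j j * (lam j : ℂ)).re| := Finset.abs_sum_le_sum_abs _ _
    _ ≤ ∑ j, ‖A‖ * |lam j| := by
        apply Finset.sum_le_sum
        intro j _
        have h1 : ((star U * A * U) j j * (lam j : ℂ)).re = ((star U * A * U) j j).re * lam j := by
          simp [Complex.mul_re]
        rw [h1, abs_mul]
        apply mul_le_mul_of_nonneg_right _ (abs_nonneg _)
        exact (Complex.abs_re_le_norm _).trans (hbound j)


lemma matFun_isHermitian (f : ℝ → ℝ) (A : Matrix n n ℂ) : (matFun f A).IsHermitian := by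
  rw [matFun]
  split_ifs with h
  · rw [Matrix.star_eq_conjTranspose]
    refine Matrix.isHermitian_mul_mul_conjTranspose _ ?_
    rw [Matrix.IsHermitian, Matrix.diagonal_conjTranspose]
    have hst : (star fun i => ((f (h.eigenvalues i)) : ℂ)) = fun i => ((f (h.eigenvalues i)) : ℂ) :=
      funext fun i => Complex.conj_ofReal _
    rw [hst]
  · exact Matrix.isHermitian_zero

lemma trace_matFun_mul {A : Matrix n n ℂ} (hA : A.IsHermitian) (f : ℝ → ℝ) :
    Matrix.trace (matFun f A * A)
      = ((∑ i, f (hA.eigenvalues i) * hA.eigenvalues i : ℝ) : ℂ) := by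
  classical
  set U : Matrix n n ℂ := (hA.eigenvectorUnitary : Matrix n n ℂ) with hU
  have hUU : star U * U = 1 := Matrix.mem_unitaryGroup_iff'.mp hA.eigenvectorUnitary.2
  set D : Matrix n n ℂ := Matrix.diagonal (fun i => (f (hA.eigenvalues i) : ℂ)) with hD
  set D' : Matrix n n ℂ := Matrix.diagonal (RCLike.ofReal ∘ hA.eigenvalues) with hD'
  have h1 : matFun f A = U * D * star U := by
    rw [matFun, dif_pos hA]
  have h2 : A = U * D' * star U := by rw [hA.spectral_theorem, Unitary.conjStarAlgAut_apply]
  have hcancel : ∀ X : Matrix n n ℂ, star U * (U * X) = X := fun X => by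
    rw [← Matrix.mul_assoc, hUU, Matrix.one_mul]
  have h3 : matFun f A * A = U * (D * (D' * star U)) := by
    rw [h1, h2]
    simp only [Matrix.mul_assoc]
    rw [hcancel]
  rw [h3, Matrix.trace_mul_comm]
  simp only [Matrix.mul_assoc]
  rw [hUU, Matrix.mul_one, hD, hD', Matrix.diagonal_mul_diagonal, Matrix.trace_diagonal]
  have hco : (RCLike.ofReal ∘ hA.eigenvalues : n → ℂ) = fun i => (hA.eigenvalues i : ℂ) := rfl
  rw [hco]
  push_cast
  rfl

lemma matFun_norm_le {A : Matrix n n ℂ} (hA : A.IsHermitian) (f : ℝ → ℝ) {r : ℝ}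
    (hr : 0 ≤ r) (h : ∀ i, |f (hA.eigenvalues i)| ≤ r) : ‖matFun f A‖ ≤ r := by
  rw [matFun, dif_pos hA, ← Unitary.coe_star, CStarRing.norm_mul_coe_unitary,
    CStarRing.norm_coe_unitary_mul]
  refine norm_diagonal_le _ hr fun i => ?_
  rw [Complex.norm_real]
  exact (Real.norm_eq_abs _) ▸ h i

lemma matFun_opNorm_le {A : Matrix n n ℂ} (hA : A.IsHermitian) (f : ℝ → ℝ) {r : ℝ}
    (hr : 0 ≤ r) (h : ∀ i, |f (hA.eigenvalues i)| ≤ r) : opNorm (matFun f A) ≤ r := by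
  rw [opNorm_eq]
  exact matFun_norm_le hA f hr h

lemma sum_mulVec' {κ : Type*} [Fintype κ] (M : κ → Matrix n n ℂ) (v : n → ℂ) :
    (∑ k, M k) *ᵥ v = ∑ k, (M k) *ᵥ v := by
  ext x
  simp only [Matrix.mulVec, dotProduct, Matrix.sum_apply, Finset.sum_apply,
    Finset.sum_mul]
  rw [Finset.sum_comm]

lemma dotProduct_sum' (u : n → ℂ) {κ : Type*} [Fintype κ] (w : κ → n → ℂ) :
    u ⬝ᵥ (∑ k, w k) = ∑ k, u ⬝ᵥ w k := by
  simp [dotProduct, Finset.sum_apply, Finset.mul_sum]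
  rw [Finset.sum_comm]

lemma dot_self_re (u : n → ℂ) : (star u ⬝ᵥ u).re = ∑ x, ‖u x‖ ^ 2 := by
  rw [dotProduct, Complex.re_sum]
  apply Finset.sum_congr rfl
  intro x _
  simp only [Pi.star_apply, RCLike.star_def]
  rw [mul_comm, Complex.mul_conj, Complex.ofReal_re, Complex.normSq_eq_norm_sq]

lemma kraus_conj (V M : Matrix n n ℂ) (v : n → ℂ) :
    star v ⬝ᵥ ((V * M * Vᴴ) *ᵥ v) = star (Vᴴ *ᵥ v) ⬝ᵥ (M *ᵥ (Vᴴ *ᵥ v)) := by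
  rw [Matrix.star_mulVec, Matrix.conjTranspose_conjTranspose]
  rw [← Matrix.dotProduct_mulVec, Matrix.mulVec_mulVec, Matrix.mulVec_mulVec]

lemma kraus {κ : Type*} [Fintype κ] (V : κ → Matrix n n ℂ)
    (hV : ∑ k, V k * (V k)ᴴ = 1) {A : Matrix n n ℂ} (hA : A.IsHermitian) :
    ‖∑ k, V k * A * (V k)ᴴ‖ ≤ ‖A‖ := by
  have hherm : (∑ k, V k * A * (V k)ᴴ).IsHermitian := by
    rw [Matrix.IsHermitian, Matrix.conjTranspose_sum]
    apply Finset.sum_congr rfl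
    intro k _
    exact Matrix.isHermitian_mul_mul_conjTranspose _ hA
  refine herm_norm_le hherm (norm_nonneg A) fun v hv => ?_
  have hexp : star v ⬝ᵥ ((∑ k, V k * A * (V k)ᴴ) *ᵥ v)
      = ∑ k, star ((V k)ᴴ *ᵥ v) ⬝ᵥ (A *ᵥ ((V k)ᴴ *ᵥ v)) := by
    rw [sum_mulVec', dotProduct_sum']
    exact Finset.sum_congr rfl fun k _ => kraus_conj _ _ _
  have hsum : ∑ k, ∑ x, ‖((V k)ᴴ *ᵥ v) x‖ ^ 2 = ∑ x, ‖v x‖ ^ 2 := by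
    have h1 : ∀ k, ∑ x, ‖((V k)ᴴ *ᵥ v) x‖ ^ 2
        = (star v ⬝ᵥ ((V k * (V k)ᴴ) *ᵥ v)).re := by
      intro k
      rw [← dot_self_re]
      congr 1
      have := kraus_conj (V k) 1 v
      simpa [Matrix.one_mulVec] using this.symm
    simp only [h1]
    rw [← Complex.re_sum, ← dotProduct_sum']
    rw [← sum_mulVec', hV, Matrix.one_mulVec, dot_self_re]
  rw [hexp]
  calc ‖∑ k, star ((V k)ᴴ *ᵥ v) ⬝ᵥ (A *ᵥ ((V k)ᴴ *ᵥ v))‖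
      ≤ ∑ k, ‖star ((V k)ᴴ *ᵥ v) ⬝ᵥ (A *ᵥ ((V k)ᴴ *ᵥ v))‖ := norm_sum_le _ _
    _ ≤ ∑ k, ‖A‖ * ∑ x, ‖((V k)ᴴ *ᵥ v) x‖ ^ 2 := by
        exact Finset.sum_le_sum fun k _ => quad_le A _
    _ = ‖A‖ * ∑ x, ‖v x‖ ^ 2 := by rw [← Finset.mul_sum, hsum]
    _ ≤ ‖A‖ * 1 := by
        apply mul_le_mul_of_nonneg_left hv (norm_nonneg _)
    _ = ‖A‖ := mul_one _


end Aux2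

end GenMat



variable {ι : Type*} [Fintype ι] [DecidableEq ι] {d : ι → Type*}
  [∀ i, Fintype (d i)] [∀ i, DecidableEq (d i)] [∀ i, Nonempty (d i)]

/-- The averaging (pinching) channel at site `i`. -/
def Phi (i : ι) (A : Matrix (∀ j, d j) (∀ j, d j) ℂ) : Matrix (∀ j, d j) (∀ j, d j) ℂ :=
  fun x y => if x i = y i then
    (Fintype.card (d i) : ℂ)⁻¹ * ∑ a, A (Function.update x i a) (Function.update y i a)
  else 0

variable {i : ι} {A B : Matrix (∀ j, d j) (∀ j, d j) ℂ}

lemma Phi_sub (i : ι) (A B : Matrix (∀ j, d j) (∀ j, d j) ℂ) :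
    Phi i (A - B) = Phi i A - Phi i B := by
  ext x y
  simp only [Phi, Matrix.sub_apply]
  split_ifs with h
  · rw [← mul_sub, ← Finset.sum_sub_distrib]
  · rw [sub_zero]

lemma Phi_isHermitian (i : ι) (hA : A.IsHermitian) : (Phi i A).IsHermitian := by
  have hAe : ∀ u v, star (A u v) = A v u := fun u v => by
    have := congr_fun (congr_fun hA v) u
    rwa [Matrix.conjTranspose_apply] at this
  ext x y
  rw [Matrix.conjTranspose_apply, Phi, Phi]
  by_cases h : x i = y i
  · rw [if_pos h.symm, if_pos h]
    rw [star_mul', star_inv₀, star_natCast, star_sum]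
    congr 1
    apply Finset.sum_congr rfl
    intro a _
    exact hAe _ _
  · rw [if_neg (fun hc => h hc.symm), if_neg h, star_zero]

lemma Phi_idem (i : ι) (A : Matrix (∀ j, d j) (∀ j, d j) ℂ) :
    Phi i (Phi i A) = Phi i A := by
  ext x y
  simp only [Phi]
  by_cases h : x i = y i
  · rw [if_pos h, if_pos h]
    have hinner : ∀ a : d i,
        (if (Function.update x i a) i = (Function.update y i a) i then
          (Fintype.card (d i) : ℂ)⁻¹ *
            ∑ b, A (Function.update (Function.update x i a) i b)
              (Function.update (Function.update y i a) i b)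
        else 0)
        = (Fintype.card (d i) : ℂ)⁻¹ * ∑ b, A (Function.update x i b) (Function.update y i b) := by
      intro a
      rw [if_pos (by simp)]
      simp only [Function.update_idem]
    rw [Finset.sum_congr rfl (fun a _ => hinner a), Finset.sum_const, Finset.card_univ,
      nsmul_eq_mul, ← mul_assoc]
    rw [inv_mul_cancel₀ (by exact_mod_cast Fintype.card_ne_zero), one_mul]
  · rw [if_neg h, if_neg h]

lemma Phi_comm (i j : ι) (A : Matrix (∀ j, d j) (∀ j, d j) ℂ) :
    Phi i (Phi j A) = Phi j (Phi i A) := by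
  by_cases hij : i = j
  · subst hij; rfl
  ext x y
  simp only [Phi]
  by_cases hi : x i = y i <;> by_cases hj : x j = y j
  · rw [if_pos hi, if_pos hj]
    have h1 : ∀ a : d i, (Function.update x i a) j = x j := fun a =>
      Function.update_of_ne (Ne.symm hij) _ _
    have h2 : ∀ a : d i, (Function.update y i a) j = y j := fun a =>
      Function.update_of_ne (Ne.symm hij) _ _
    have h3 : ∀ b : d j, (Function.update x j b) i = x i := fun b =>
      Function.update_of_ne hij _ _
    have h4 : ∀ b : d j, (Function.update y j b) i = y i := fun b =>
      Function.update_of_ne hij _ _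
    simp only [h1, h2, h3, h4, hj, hi, if_true, eq_self_iff_true]
    simp only [Finset.mul_sum]
    rw [Finset.sum_comm]
    apply Finset.sum_congr rfl; intro a _
    apply Finset.sum_congr rfl; intro b _
    rw [Function.update_comm hij, Function.update_comm hij]
    ring
  · rw [if_pos hi, if_neg hj]
    have : ∀ a : d i, (if (Function.update x i a) j = (Function.update y i a) j then
        (Fintype.card (d j) : ℂ)⁻¹ *
          ∑ b, A (Function.update (Function.update x i a) j b)
            (Function.update (Function.update y i a) j b) else 0) = 0 := by
      intro a
      rw [if_neg]
      simpa [Function.update_of_ne (Ne.symm hij)] using hj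
    rw [Finset.sum_congr rfl (fun a _ => this a)]
    simp
  · rw [if_neg hi, if_pos hj]
    have : ∀ b : d j, (if (Function.update x j b) i = (Function.update y j b) i then
        (Fintype.card (d i) : ℂ)⁻¹ *
          ∑ a, A (Function.update (Function.update x j b) i a)
            (Function.update (Function.update y j b) i a) else 0) = 0 := by
      intro b
      rw [if_neg]
      simpa [Function.update_of_ne hij] using hi
    rw [Finset.sum_congr rfl (fun b _ => this b)]
    simp
  · rw [if_neg hi, if_neg hj]


lemma Phi_embedAt (i : ι) (M : Matrix (∀ j : {j : ι // j ≠ i}, d j.1) (∀ j : {j : ι // j ≠ i}, d j.1) ℂ) :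
    Phi i (embedAt i M) = embedAt i M := by
  ext x y
  simp only [Phi, embedAt]
  by_cases h : x i = y i
  · rw [if_pos h, if_pos h]
    have hterm : ∀ a : d i,
        (if (Function.update x i a) i = (Function.update y i a) i then
          M (fun j => (Function.update x i a) j.1) (fun j => (Function.update y i a) j.1) else 0)
        = M (fun j => x j.1) (fun j => y j.1) := by
      intro a
      rw [if_pos (by simp)]
      congr 1 <;> funext j <;> exact Function.update_of_ne j.2 _ _
    rw [Finset.sum_congr rfl (fun a _ => hterm a), Finset.sum_const, Finset.card_univ,
      nsmul_eq_mul, ← mul_assoc,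
      inv_mul_cancel₀ (by exact_mod_cast Fintype.card_ne_zero), one_mul]
  · rw [if_neg h, if_neg h]

lemma Phi_one (i : ι) : Phi i (1 : Matrix (∀ j, d j) (∀ j, d j) ℂ) = 1 := by
  ext x y
  simp only [Phi]
  by_cases hxy : x = y
  · subst hxy
    rw [if_pos rfl, Matrix.one_apply_eq]
    have : ∀ a : d i, (1 : Matrix (∀ j, d j) (∀ j, d j) ℂ)
        (Function.update x i a) (Function.update x i a) = 1 := fun a => Matrix.one_apply_eq _
    rw [Finset.sum_congr rfl (fun a _ => this a), Finset.sum_const, Finset.card_univ,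
      nsmul_eq_mul, mul_one, inv_mul_cancel₀ (by exact_mod_cast Fintype.card_ne_zero)]
  · rw [Matrix.one_apply_ne hxy]
    by_cases h : x i = y i
    · rw [if_pos h]
      obtain ⟨j, hj⟩ : ∃ j, x j ≠ y j := by
        by_contra hc; push_neg at hc; exact hxy (funext hc)
      have hji : j ≠ i := fun he => hj (he ▸ h)
      have hz : ∀ a : d i, (1 : Matrix (∀ j, d j) (∀ j, d j) ℂ)
          (Function.update x i a) (Function.update y i a) = 0 := by
        intro a
        apply Matrix.one_apply_ne
        intro hc
        apply hj
        have := congr_fun hc j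
        rwa [Function.update_of_ne hji, Function.update_of_ne hji] at this
      rw [Finset.sum_congr rfl (fun a _ => hz a), Finset.sum_const]
      simp
    · rw [if_neg h]

/-- Partial isometries implementing the pinching channel. -/
def pE (i : ι) (c a : d i) : Matrix (∀ j, d j) (∀ j, d j) ℂ :=
  fun x z => if x i = c ∧ z = Function.update x i a then 1 else 0

lemma pE_mul_mul (i : ι) (c a : d i) (A : Matrix (∀ j, d j) (∀ j, d j) ℂ) (x y : ∀ j, d j) :
    (pE i c a * A * (pE i c a)ᴴ) x y
      = if x i = c ∧ y i = c then A (Function.update x i a) (Function.update y i a) else 0 := by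
  have h1 : ∀ (u : ∀ j, d j) (w : ∀ j, d j), (pE i c a * A) u w
      = if u i = c then A (Function.update u i a) w else 0 := by
    intro u w
    rw [Matrix.mul_apply]
    by_cases hu : u i = c
    · simp [pE, hu]
    · simp [pE, hu]
  rw [Matrix.mul_apply]
  simp only [Matrix.conjTranspose_apply, h1]
  by_cases hx : x i = c <;> by_cases hy : y i = c
  · simp [pE, hx, hy]
  · simp [pE, hx, hy]
  · simp [pE, hx, hy]
  · simp [pE, hx, hy]

lemma sum_ite_site {x y : ∀ j, d j} (i : ι) (v : ℂ) :
    (∑ c : d i, if x i = c ∧ y i = c then v else 0) = if x i = y i then v else 0 := by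
  by_cases hxy : x i = y i
  · rw [if_pos hxy, hxy]
    simp
  · rw [if_neg hxy]
    apply Finset.sum_eq_zero
    intro c _
    rw [if_neg]
    rintro ⟨h1, h2⟩
    exact hxy (h1.trans h2.symm)

lemma sum_pE_mul (i : ι) (A : Matrix (∀ j, d j) (∀ j, d j) ℂ) :
    ∑ p : d i × d i, pE i p.1 p.2 * A * (pE i p.1 p.2)ᴴ
      = (Fintype.card (d i) : ℂ) • Phi i A := by
  ext x y
  rw [Matrix.sum_apply]
  have h1 : ∀ p : d i × d i, (pE i p.1 p.2 * A * (pE i p.1 p.2)ᴴ) x y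
      = if x i = p.1 ∧ y i = p.1 then A (Function.update x i p.2) (Function.update y i p.2)
        else 0 := fun p => pE_mul_mul i p.1 p.2 A x y
  rw [Finset.sum_congr rfl (fun p _ => h1 p), Fintype.sum_prod_type]
  have h2 : ∀ c : d i, (∑ a : d i, if x i = c ∧ y i = c then
      A (Function.update x i a) (Function.update y i a) else 0)
      = if x i = c ∧ y i = c then
        ∑ a : d i, A (Function.update x i a) (Function.update y i a) else 0 := by
    intro c
    split_ifs with h
    · rfl
    · simp
  rw [Finset.sum_congr rfl (fun c _ => h2 c), sum_ite_site i]
  rw [Matrix.smul_apply, Phi]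
  split_ifs with h
  · rw [smul_eq_mul, ← mul_assoc, mul_inv_cancel₀ (by exact_mod_cast Fintype.card_ne_zero),
      one_mul]
  · rw [smul_zero]

section Contract
open scoped Matrix.Norms.L2Operator

lemma Phi_norm_le (i : ι) {A : Matrix (∀ j, d j) (∀ j, d j) ℂ} (hA : A.IsHermitian) :
    ‖Phi i A‖ ≤ ‖A‖ := by
  classical
  set s : ℝ := Real.sqrt ((Fintype.card (d i) : ℝ))⁻¹ with hs
  set V : d i × d i → Matrix (∀ j, d j) (∀ j, d j) ℂ :=
    fun p => (s : ℂ) • pE i p.1 p.2 with hV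
  have hcard : ((Fintype.card (d i) : ℂ)) ≠ 0 := by exact_mod_cast Fintype.card_ne_zero
  have hss : (s : ℂ) * (s : ℂ) = ((Fintype.card (d i) : ℂ))⁻¹ := by
    rw [← Complex.ofReal_mul, Real.mul_self_sqrt (by positivity)]
    push_cast
    rfl
  have hsmul : ∀ (B : Matrix (∀ j, d j) (∀ j, d j) ℂ) (p : d i × d i),
      V p * B * (V p)ᴴ = ((Fintype.card (d i) : ℂ))⁻¹ • (pE i p.1 p.2 * B * (pE i p.1 p.2)ᴴ) := by
    intro B p
    rw [hV]
    simp only [Matrix.conjTranspose_smul, Matrix.smul_mul, Matrix.mul_smul, smul_smul]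
    rw [RCLike.star_def, Complex.conj_ofReal, hss]
  have hVV : ∑ p : d i × d i, V p * (V p)ᴴ = 1 := by
    have : ∀ p : d i × d i, V p * (V p)ᴴ
        = ((Fintype.card (d i) : ℂ))⁻¹ • (pE i p.1 p.2 * (pE i p.1 p.2)ᴴ) := by
      intro p
      have := hsmul 1 p
      simpa [Matrix.mul_one] using this
    rw [Finset.sum_congr rfl (fun p _ => this p), ← Finset.smul_sum]
    have h1 : ∑ p : d i × d i, pE i p.1 p.2 * (pE i p.1 p.2)ᴴ
        = (Fintype.card (d i) : ℂ) • (1 : Matrix (∀ j, d j) (∀ j, d j) ℂ) := by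
      have := sum_pE_mul i (1 : Matrix (∀ j, d j) (∀ j, d j) ℂ)
      simpa [Matrix.mul_one, Phi_one] using this
    rw [h1, smul_smul, inv_mul_cancel₀ hcard, one_smul]
  have hVAV : ∑ p : d i × d i, V p * A * (V p)ᴴ = Phi i A := by
    rw [Finset.sum_congr rfl (fun p _ => hsmul A p), ← Finset.smul_sum, sum_pE_mul i A,
      smul_smul, inv_mul_cancel₀ hcard, one_smul]
  rw [← hVAV]
  exact kraus V hVV hA

end Contract

lemma Phi_fix_ne {i : ι} {A : Matrix (∀ j, d j) (∀ j, d j) ℂ} (h : Phi i A = A)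
    {x y : ∀ j, d j} (hxy : x i ≠ y i) : A x y = 0 := by
  have := congr_fun (congr_fun h x) y
  rw [Phi, if_neg hxy] at this
  exact this.symm

lemma Phi_fix_update {i : ι} {A : Matrix (∀ j, d j) (∀ j, d j) ℂ} (h : Phi i A = A)
    (x : ∀ j, d j) (b : d i) :
    A x x = A (Function.update x i b) (Function.update x i b) := by
  have hx := congr_fun (congr_fun h x) x
  rw [Phi, if_pos rfl] at hx
  have hx' := congr_fun (congr_fun h (Function.update x i b)) (Function.update x i b)
  rw [Phi, if_pos rfl] at hx'
  simp only [Function.update_idem] at hx'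
  rw [← hx, ← hx']

lemma diag_const {A : Matrix (∀ j, d j) (∀ j, d j) ℂ}
    (h : ∀ (x : ∀ j, d j) (i : ι) (b : d i),
      A x x = A (Function.update x i b) (Function.update x i b))
    (x y : ∀ j, d j) : A x x = A y y := by
  classical
  suffices claim : ∀ s : Finset ι, ∀ x y : ∀ j, d j, (∀ j ∉ s, x j = y j) → A x x = A y y by
    exact claim Finset.univ x y (fun j hj => absurd (Finset.mem_univ j) hj)
  intro s
  induction s using Finset.induction_on with
  | empty =>
    intro x y hxy
    have : x = y := funext fun j => hxy j (Finset.notMem_empty j)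
    rw [this]
  | insert i s hni ih =>
    intro x y hxy
    rw [h x i (y i)]
    apply ih
    intro j hj
    by_cases hji : j = i
    · subst hji; rw [Function.update_self]
    · rw [Function.update_of_ne hji]
      exact hxy j (by simp [hji, hj])

lemma fixed_scalar {A : Matrix (∀ j, d j) (∀ j, d j) ℂ} (hA : A.IsHermitian)
    (hfix : ∀ i, Phi i A = A) (x₀ : ∀ j, d j) :
    ∃ c : ℝ, A = (c : ℂ) • 1 := by
  have hdiag : ∀ x y, A x x = A y y :=
    diag_const (fun x i b => Phi_fix_update (hfix i) x b)
  have hreal : (starRingEnd ℂ) (A x₀ x₀) = A x₀ x₀ := by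
    have := congr_fun (congr_fun hA x₀) x₀
    rwa [Matrix.conjTranspose_apply, RCLike.star_def] at this
  refine ⟨(A x₀ x₀).re, ?_⟩
  have hc : ((A x₀ x₀).re : ℂ) = A x₀ x₀ := Complex.conj_eq_iff_re.mp hreal
  ext x y
  by_cases hxy : x = y
  · subst hxy
    rw [Matrix.smul_apply, Matrix.one_apply_eq, smul_eq_mul, mul_one, hc]
    exact hdiag x x₀
  · rw [Matrix.smul_apply, Matrix.one_apply_ne hxy, smul_zero]
    obtain ⟨i, hi⟩ : ∃ i, x i ≠ y i := by
      by_contra hc'; push_neg at hc'; exact hxy (funext hc')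
    exact Phi_fix_ne (hfix i) hi



/-! ### embedAt lemmas -/

lemma embedAt_zero (i : ι) : embedAt (d := d) i 0 = 0 := by
  ext x y
  simp [embedAt]

lemma embedAt_add (i : ι)
    (M N : Matrix (∀ j : {j : ι // j ≠ i}, d j.1) (∀ j : {j : ι // j ≠ i}, d j.1) ℂ) :
    embedAt i (M + N) = embedAt i M + embedAt i N := by
  ext x y
  simp only [embedAt, Matrix.add_apply]
  split_ifs with h
  · rfl
  · rw [add_zero]

lemma embedAt_smul (i : ι) (c : ℂ)
    (M : Matrix (∀ j : {j : ι // j ≠ i}, d j.1) (∀ j : {j : ι // j ≠ i}, d j.1) ℂ) :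
    embedAt i (c • M) = c • embedAt i M := by
  ext x y
  simp only [embedAt, Matrix.smul_apply, smul_eq_mul]
  split_ifs with h
  · rfl
  · rw [mul_zero]

lemma embedAt_conjTranspose (i : ι)
    (M : Matrix (∀ j : {j : ι // j ≠ i}, d j.1) (∀ j : {j : ι // j ≠ i}, d j.1) ℂ) :
    (embedAt i M)ᴴ = embedAt i Mᴴ := by
  ext x y
  simp only [Matrix.conjTranspose_apply, embedAt]
  split_ifs with h1 h2 h3
  · rfl
  · exact absurd h1.symm h2
  · exact absurd h3.symm h1
  · exact star_zero _

lemma embedAt_isHermitian (i : ι)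
    {M : Matrix (∀ j : {j : ι // j ≠ i}, d j.1) (∀ j : {j : ι // j ≠ i}, d j.1) ℂ}
    (hM : M.IsHermitian) : (embedAt i M).IsHermitian := by
  rw [Matrix.IsHermitian, embedAt_conjTranspose, hM]

/-! ### iterated pinching -/

def PhiL (l : List ι) (A : Matrix (∀ j, d j) (∀ j, d j) ℂ) : Matrix (∀ j, d j) (∀ j, d j) ℂ :=
  l.foldr (fun i B => Phi i B) A

@[simp] lemma PhiL_nil (A : Matrix (∀ j, d j) (∀ j, d j) ℂ) : PhiL [] A = A := rfl

@[simp] lemma PhiL_cons (i : ι) (l : List ι) (A : Matrix (∀ j, d j) (∀ j, d j) ℂ) :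
    PhiL (i :: l) A = Phi i (PhiL l A) := rfl

lemma PhiL_isHermitian (l : List ι) {A : Matrix (∀ j, d j) (∀ j, d j) ℂ}
    (hA : A.IsHermitian) : (PhiL l A).IsHermitian := by
  induction l with
  | nil => exact hA
  | cons i t ih => exact Phi_isHermitian i ih

lemma PhiL_sub (l : List ι) (A B : Matrix (∀ j, d j) (∀ j, d j) ℂ) :
    PhiL l (A - B) = PhiL l A - PhiL l B := by
  induction l with
  | nil => rfl
  | cons i t ih => rw [PhiL_cons, ih, Phi_sub, PhiL_cons, PhiL_cons]

lemma PhiL_comm (i : ι) (l : List ι) (A : Matrix (∀ j, d j) (∀ j, d j) ℂ) :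
    Phi i (PhiL l A) = PhiL l (Phi i A) := by
  induction l with
  | nil => rfl
  | cons j t ih => rw [PhiL_cons, Phi_comm, ih, PhiL_cons]

lemma PhiL_fix {i : ι} {l : List ι} (h : i ∈ l) (A : Matrix (∀ j, d j) (∀ j, d j) ℂ) :
    Phi i (PhiL l A) = PhiL l A := by
  induction l with
  | nil => exact absurd h List.not_mem_nil
  | cons j t ih =>
    rw [PhiL_cons]
    rcases List.mem_cons.mp h with h1 | h2
    · subst h1; rw [Phi_idem]
    · rw [Phi_comm, ih h2]

section NormPart
open scoped Matrix.Norms.L2Operator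

lemma PhiL_norm_le (l : List ι) {A : Matrix (∀ j, d j) (∀ j, d j) ℂ} (hA : A.IsHermitian) :
    ‖PhiL l A‖ ≤ ‖A‖ := by
  induction l with
  | nil => exact le_refl _
  | cons i t ih =>
    rw [PhiL_cons]
    exact le_trans (Phi_norm_le i (PhiL_isHermitian t hA)) ih

lemma telescope (l : List ι) {A : Matrix (∀ j, d j) (∀ j, d j) ℂ} (hA : A.IsHermitian) :
    ‖A - PhiL l A‖ ≤ (l.map fun i => ‖A - Phi i A‖).sum := by
  induction l with
  | nil => simp
  | cons i t ih =>
    rw [PhiL_cons, List.map_cons, List.sum_cons]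
    have hsplit : A - Phi i (PhiL t A) = (A - PhiL t A) + PhiL t (A - Phi i A) := by
      rw [PhiL_sub, PhiL_comm]
      abel
    rw [hsplit]
    calc ‖(A - PhiL t A) + PhiL t (A - Phi i A)‖
        ≤ ‖A - PhiL t A‖ + ‖PhiL t (A - Phi i A)‖ := norm_add_le _ _
      _ ≤ (t.map fun i => ‖A - Phi i A‖).sum + ‖A - Phi i A‖ := by
          apply add_le_add ih
          exact PhiL_norm_le t (hA.sub (Phi_isHermitian i hA))
      _ = ‖A - Phi i A‖ + (t.map fun i => ‖A - Phi i A‖).sum := by ring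

lemma step_bound (i : ι) {H : Matrix (∀ j, d j) (∀ j, d j) ℂ} (hH : H.IsHermitian) :
    ‖H - Phi i H‖ ≤ 2 * ⨅ M : Matrix (∀ j : {j : ι // j ≠ i}, d j.1)
      (∀ j : {j : ι // j ≠ i}, d j.1) ℂ, opNorm (H - embedAt i M) := by
  set δ : ℝ := ⨅ M : Matrix (∀ j : {j : ι // j ≠ i}, d j.1)
      (∀ j : {j : ι // j ≠ i}, d j.1) ℂ, opNorm (H - embedAt i M) with hδ
  apply le_of_forall_pos_le_add
  intro ε hε
  have hlt : δ < δ + ε / 2 := by linarith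
  obtain ⟨M, hM⟩ := exists_lt_of_ciInf_lt (hδ ▸ hlt)
  set M' := (2⁻¹ : ℂ) • (M + Mᴴ) with hM'
  have hM'h : M'.IsHermitian := by
    rw [Matrix.IsHermitian, hM', Matrix.conjTranspose_smul, Matrix.conjTranspose_add,
      Matrix.conjTranspose_conjTranspose]
    rw [show star (2⁻¹:ℂ) = (2⁻¹:ℂ) by simp]
    rw [add_comm]
  have hct : (H - embedAt i M)ᴴ = H - embedAt i Mᴴ := by
    rw [Matrix.conjTranspose_sub, hH, embedAt_conjTranspose]
  have hrw : H - embedAt i M' = (2⁻¹ : ℂ) • ((H - embedAt i M) + (H - embedAt i Mᴴ)) := by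
    rw [hM', embedAt_smul, embedAt_add]
    module
  have hnorm' : ‖H - embedAt i M'‖ ≤ ‖H - embedAt i M‖ := by
    rw [hrw]
    rw [norm_smul]
    have h2 : ‖(2⁻¹ : ℂ)‖ = 2⁻¹ := by norm_num
    rw [h2]
    calc 2⁻¹ * ‖(H - embedAt i M) + (H - embedAt i Mᴴ)‖
        ≤ 2⁻¹ * (‖H - embedAt i M‖ + ‖H - embedAt i Mᴴ‖) := by
          apply mul_le_mul_of_nonneg_left (norm_add_le _ _) (by norm_num)
      _ = 2⁻¹ * (‖H - embedAt i M‖ + ‖(H - embedAt i M)ᴴ‖) := by rw [hct]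
      _ = ‖H - embedAt i M‖ := by
          rw [Matrix.l2_opNorm_conjTranspose]
          ring
  have hsplit : H - Phi i H = (H - embedAt i M') - Phi i (H - embedAt i M') := by
    rw [Phi_sub, Phi_embedAt]
    abel
  have hherm' : (H - embedAt i M').IsHermitian := hH.sub (embedAt_isHermitian i hM'h)
  calc ‖H - Phi i H‖ = ‖(H - embedAt i M') - Phi i (H - embedAt i M')‖ := by rw [hsplit]
    _ ≤ ‖H - embedAt i M'‖ + ‖Phi i (H - embedAt i M')‖ := norm_sub_le _ _
    _ ≤ ‖H - embedAt i M'‖ + ‖H - embedAt i M'‖ := by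
        exact add_le_add le_rfl (Phi_norm_le i hherm')
    _ ≤ (δ + ε / 2) + (δ + ε / 2) := by
        have := hnorm'.trans (le_of_lt (by rw [opNorm_eq] at hM; exact hM))
        exact add_le_add this this
    _ = 2 * δ + ε := by ring

lemma delta_le_lip [Nonempty ι] (i : ι) (H : Matrix (∀ j, d j) (∀ j, d j) ℂ) :
    2 * (⨅ M : Matrix (∀ j : {j : ι // j ≠ i}, d j.1)
      (∀ j : {j : ι // j ≠ i}, d j.1) ℂ, opNorm (H - embedAt i M)) ≤ lipNorm H := by
  rw [lipNorm]
  have hbdd : BddAbove (Set.range fun i : ι =>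
      ⨅ M : Matrix (∀ j : {j : ι // j ≠ i}, d j.1) (∀ j : {j : ι // j ≠ i}, d j.1) ℂ,
        opNorm (H - embedAt i M)) := by
    refine ⟨opNorm H, ?_⟩
    rintro r ⟨i', rfl⟩
    calc (⨅ M : Matrix (∀ j : {j : ι // j ≠ i'}, d j.1) (∀ j : {j : ι // j ≠ i'}, d j.1) ℂ,
          opNorm (H - embedAt i' M)) ≤ opNorm (H - embedAt i' 0) := by
          apply ciInf_le
          refine ⟨0, ?_⟩
          rintro r ⟨M, rfl⟩
          show (0:ℝ) ≤ opNorm _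
          rw [opNorm_eq]
          exact norm_nonneg _
      _ = opNorm H := by rw [embedAt_zero, sub_zero]
  have hle := le_ciSup hbdd i
  linarith

lemma step_bound_lip [Nonempty ι] (i : ι) {H : Matrix (∀ j, d j) (∀ j, d j) ℂ}
    (hH : H.IsHermitian) : ‖H - Phi i H‖ ≤ lipNorm H :=
  (step_bound i hH).trans (delta_le_lip i H)

lemma lipNorm_le_two_opNorm [Nonempty ι] (H : Matrix (∀ j, d j) (∀ j, d j) ℂ) :
    lipNorm H ≤ 2 * opNorm H := by
  rw [lipNorm]
  have : (⨆ i : ι, ⨅ M : Matrix (∀ j : {j : ι // j ≠ i}, d j.1)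
      (∀ j : {j : ι // j ≠ i}, d j.1) ℂ, opNorm (H - embedAt i M)) ≤ opNorm H := by
    apply ciSup_le
    intro i
    calc (⨅ M : Matrix (∀ j : {j : ι // j ≠ i}, d j.1) (∀ j : {j : ι // j ≠ i}, d j.1) ℂ,
        opNorm (H - embedAt i M)) ≤ opNorm (H - embedAt i 0) := by
          apply ciInf_le
          refine ⟨0, ?_⟩
          rintro r ⟨M, rfl⟩
          show (0:ℝ) ≤ opNorm _
          rw [opNorm_eq]
          exact norm_nonneg _
      _ = opNorm H := by rw [embedAt_zero, sub_zero]
  linarith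

lemma lipNorm_nonneg [Nonempty ι] (H : Matrix (∀ j, d j) (∀ j, d j) ℂ) : 0 ≤ lipNorm H := by
  have i : ι := Classical.arbitrary ι
  have h1 : (0:ℝ) ≤ ⨅ M : Matrix (∀ j : {j : ι // j ≠ i}, d j.1)
      (∀ j : {j : ι // j ≠ i}, d j.1) ℂ, opNorm (H - embedAt i M) := by
    apply le_ciInf
    intro M
    rw [opNorm_eq]
    exact norm_nonneg _
  have := (delta_le_lip i H)
  linarith

lemma herm_scalar_approx [Nonempty ι] {H : Matrix (∀ j, d j) (∀ j, d j) ℂ}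
    (hH : H.IsHermitian) (x₀ : ∀ j, d j) :
    ∃ c : ℝ, ‖H - (c : ℂ) • 1‖ ≤ (Fintype.card ι : ℝ) * lipNorm H := by
  classical
  set l : List ι := Finset.univ.toList with hl
  have hfix : ∀ i, Phi i (PhiL l H) = PhiL l H := fun i =>
    PhiL_fix (by rw [hl]; exact Finset.mem_toList.mpr (Finset.mem_univ i)) H
  obtain ⟨c, hc⟩ := fixed_scalar (PhiL_isHermitian l hH) hfix x₀
  refine ⟨c, ?_⟩
  rw [← hc]
  calc ‖H - PhiL l H‖ ≤ (l.map fun i => ‖H - Phi i H‖).sum := telescope l hH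
    _ ≤ (l.map fun _ => lipNorm H).sum := by
        apply List.sum_le_sum
        intro i hi
        exact step_bound_lip i hH
    _ = l.length * lipNorm H := by
        rw [List.map_const', List.sum_replicate, nsmul_eq_mul]
    _ = (Fintype.card ι : ℝ) * lipNorm H := by
        rw [hl, Finset.length_toList, Finset.card_univ]

end NormPart



end Paper

namespace Paper

/-- The quantum Wasserstein distance of order 1 on an `n`-fold tensor product satisfies
`(1/2)‖ρ − σ‖₁ ≤ ‖ρ − σ‖_{W₁} ≤ n‖ρ − σ‖₁` for all states `ρ, σ`. -/
theorem stmt7 {ι : Type*} [Fintype ι] [DecidableEq ι] [Nonempty ι] {d : ι → Type*}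
    [∀ i, Fintype (d i)] [∀ i, DecidableEq (d i)]
    (ρ σ : Matrix (∀ j, d j) (∀ j, d j) ℂ) (hρ : IsState ρ) (hσ : IsState σ) :
    (1 / 2) * traceNorm (ρ - σ) ≤ w1Norm (ρ - σ) ∧
      w1Norm (ρ - σ) ≤ (Fintype.card ι : ℝ) * traceNorm (ρ - σ) := by
  classical
  rcases isEmpty_or_nonempty (∀ j, d j) with hemp | hne
  · exfalso
    haveI := hemp
    have h0 : ρ.trace = 0 := by simp [Matrix.trace]
    rw [hρ.2] at h0
    exact one_ne_zero h0
  haveI : ∀ j, Nonempty (d j) := fun j => ⟨(Classical.arbitrary (∀ j, d j)) j⟩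
  have x₀ : ∀ j, d j := Classical.arbitrary _
  set X : Matrix (∀ j, d j) (∀ j, d j) ℂ := ρ - σ with hXdef
  have hX : X.IsHermitian := hρ.1.1.sub hσ.1.1
  have htrX : X.trace = 0 := by
    rw [hXdef, Matrix.trace_sub, hρ.2, hσ.2, sub_self]
  have htn0 : 0 ≤ traceNorm X := by
    rw [traceNorm, dif_pos hX]
    positivity
  set S : Set ℝ := {r : ℝ | ∃ H : Matrix (∀ j, d j) (∀ j, d j) ℂ,
    H.IsHermitian ∧ lipNorm H ≤ 1 ∧ r = (Matrix.trace (H * X)).re} with hSdef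
  have hub : ∀ r ∈ S, r ≤ (Fintype.card ι : ℝ) * traceNorm X := by
    rintro r ⟨H, hH, hlip, rfl⟩
    obtain ⟨c, hc⟩ := herm_scalar_approx hH x₀
    have h1 : Matrix.trace (H * X) = Matrix.trace ((H - (c : ℂ) • 1) * X) := by
      rw [Matrix.sub_mul, Matrix.trace_sub, Matrix.smul_mul, Matrix.one_mul,
        Matrix.trace_smul, htrX, smul_zero, sub_zero]
    rw [h1]
    have h2 := trace_mul_herm_le (H - (c : ℂ) • 1) hX
    refine (le_abs_self _).trans (h2.trans ?_)
    have h3 : opNorm (H - (c : ℂ) • 1) ≤ (Fintype.card ι : ℝ) * lipNorm H := by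
      rw [opNorm_eq]; exact hc
    have h4 : (Fintype.card ι : ℝ) * lipNorm H ≤ (Fintype.card ι : ℝ) := by
      have := lipNorm_nonneg H
      calc (Fintype.card ι : ℝ) * lipNorm H ≤ (Fintype.card ι : ℝ) * 1 := by
            apply mul_le_mul_of_nonneg_left hlip (by positivity)
        _ = (Fintype.card ι : ℝ) := mul_one _
    exact mul_le_mul_of_nonneg_right (h3.trans h4) htn0
  have hzero_mem : (0 : ℝ) ∈ S := by
    refine ⟨0, Matrix.isHermitian_zero, ?_, by simp⟩
    have := lipNorm_le_two_opNorm (d := d) 0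
    rw [opNorm_zero, mul_zero] at this
    linarith
  have hSne : S.Nonempty := ⟨0, hzero_mem⟩
  have hSbdd : BddAbove S := ⟨(Fintype.card ι : ℝ) * traceNorm X, hub⟩
  constructor
  · -- lower bound
    set H₀ : Matrix (∀ j, d j) (∀ j, d j) ℂ := ((2⁻¹ : ℝ) : ℂ) • matFun Real.sign X with hH₀
    have hsign : ∀ i, |Real.sign (hX.eigenvalues i)| ≤ 1 := by
      intro i
      rcases lt_trichotomy (hX.eigenvalues i) 0 with h | h | h
      · rw [Real.sign_of_neg h]; norm_num
      · rw [h, Real.sign_zero]; norm_num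
      · rw [Real.sign_of_pos h]; norm_num
    have hherm₀ : H₀.IsHermitian := by
      have hm := matFun_isHermitian Real.sign X
      have h5 : (((2⁻¹ : ℝ) : ℂ) • matFun Real.sign X).IsHermitian := by
        show _ᴴ = _
        rw [Matrix.conjTranspose_smul, hm.eq]
        congr 1
        exact Complex.conj_ofReal _
      exact hH₀ ▸ h5
    have hlip₀ : lipNorm H₀ ≤ 1 := by
      have h1 := lipNorm_le_two_opNorm H₀
      have h2 : opNorm H₀ ≤ 2⁻¹ := by
        rw [hH₀, opNorm_smul]
        have h3 : ‖((2⁻¹ : ℝ) : ℂ)‖ = 2⁻¹ := by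
          rw [Complex.norm_real, Real.norm_eq_abs]
          norm_num
        rw [h3]
        have h4 := matFun_opNorm_le hX Real.sign (r := 1) zero_le_one hsign
        nlinarith [opNorm_nonneg' (matFun Real.sign X)]
      linarith
    have htr₀ : (Matrix.trace (H₀ * X)).re = (1 / 2) * traceNorm X := by
      rw [hH₀, Matrix.smul_mul, Matrix.trace_smul, trace_matFun_mul hX Real.sign]
      have hsgn : ∀ i, Real.sign (hX.eigenvalues i) * hX.eigenvalues i = |hX.eigenvalues i| := by
        intro i
        rcases lt_trichotomy (hX.eigenvalues i) 0 with h | h | h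
        · rw [Real.sign_of_neg h, abs_of_neg h]; ring
        · rw [h, Real.sign_zero, abs_zero, zero_mul]
        · rw [Real.sign_of_pos h, abs_of_pos h, one_mul]
      rw [Finset.sum_congr rfl (fun i _ => hsgn i)]
      rw [traceNorm, dif_pos hX]
      rw [smul_eq_mul, ← Complex.ofReal_mul, Complex.ofReal_re]
      ring
    have hmem : (1 / 2) * traceNorm X ∈ S := ⟨H₀, hherm₀, hlip₀, htr₀.symm⟩
    exact le_csSup hSbdd hmem
  · exact csSup_le hSne hub

end Paper
end
end

section
/- Classical MCMI decay from complete analyticity (single-site case): let μ be a finite-volume Gibbs measure of a classical spin system on Λ with fixed boundary condition, and let C = {x} be a single site. If the system is completely analytic with constants K, ξ (i.e. ‖μ^τ_{V,Δ}/μ^{τ'}_{V,Δ} − 1‖_∞ ≤ K e^{−dist(x,Δ)/ξ} for boundary conditions τ, τ' differing only at x ∈ ∂V), then for any partition Λ = A ⊔ B ⊔ C ⊔ D, ‖log(μ_{A|CD}/μ_{A|D})‖_∞ ≤ K e^{−dist(A,C)/ξ}. -/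
open scoped BigOperators Classical

noncomputable section

namespace Paper

variable {Λ : Type*} [Fintype Λ] [DecidableEq Λ]

/-- Marginal probability of a distribution `μ` on configurations: the probability that the
configuration agrees with `τ` on the region `T`. -/
def margP (T : Finset Λ) (μ : (Λ → Bool) → ℝ) (τ : Λ → Bool) : ℝ :=
  ∑ ω : Λ → Bool, if ∀ k ∈ T, ω k = τ k then μ ω else 0

/-- Conditional probability of the configuration on `A` given the configuration on `T`. -/
def condP (A T : Finset Λ) (μ : (Λ → Bool) → ℝ) (τ : Λ → Bool) : ℝ :=
  margP (A ∪ T) μ τ / margP T μ τ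

/-- Distance between two finite sets of sites. -/
def fdistC (dst : Λ → Λ → ℝ) (A C : Finset Λ) : ℝ :=
  sInf {r : ℝ | ∃ a ∈ A, ∃ c ∈ C, r = dst a c}

lemma margP_pos (T : Finset Λ) (μ : (Λ → Bool) → ℝ) (hμpos : ∀ ω, 0 < μ ω) (τ : Λ → Bool) :
    0 < margP T μ τ := by
  unfold margP
  apply Finset.sum_pos'
  · intro ω _
    split
    · exact (hμpos ω).le
    · exact le_rfl
  · refine ⟨τ, Finset.mem_univ _, ?_⟩
    rw [if_pos fun k _ => rfl]
    exact hμpos τ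

lemma margP_split (T : Finset Λ) (μ : (Λ → Bool) → ℝ)
    (x₀ : Λ) (hx : x₀ ∉ T) (η : Λ → Bool) :
    margP T μ η = margP (insert x₀ T) μ η
      + margP (insert x₀ T) μ (Function.update η x₀ (!η x₀)) := by
  unfold margP
  rw [← Finset.sum_add_distrib]
  refine Finset.sum_congr rfl fun ω _ => ?_
  have hT : ∀ k ∈ T, Function.update η x₀ (!η x₀) k = η k := fun k hk =>
    Function.update_of_ne (fun h => hx (by rw [← h]; exact hk)) _ _
  by_cases h : ∀ k ∈ T, ω k = η k
  · rw [if_pos h]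
    by_cases h0 : ω x₀ = η x₀
    · rw [if_pos, if_neg, add_zero]
      · intro hall
        have := hall x₀ (Finset.mem_insert_self _ _)
        rw [Function.update_self, h0] at this
        exact (Bool.not_ne_self (η x₀)) this.symm
      · intro k hk
        rcases Finset.mem_insert.mp hk with rfl | hk
        · exact h0
        · exact h k hk
    · rw [if_neg, if_pos, zero_add]
      · intro k hk
        rcases Finset.mem_insert.mp hk with rfl | hk
        · rw [Function.update_self]
          cases hω : ω k <;> cases hη : η k <;> simp_all
        · rw [hT k hk]; exact h k hk
      · intro hall; exact h0 (hall x₀ (Finset.mem_insert_self _ _))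
  · rw [if_neg h, if_neg, if_neg, add_zero]
    · intro hall; exact h fun k hk => (hall k (Finset.mem_insert_of_mem hk)).trans (hT k hk)
    · intro hall; exact h fun k hk => hall k (Finset.mem_insert_of_mem hk)

lemma core (a a' q q' ε : ℝ) (ha : 0 < a) (ha' : 0 < a') (hq : 0 < q) (hq' : 0 < q')
    (h1 : |(a / q) / (a' / q') - 1| ≤ ε) (h2 : |(a' / q') / (a / q) - 1| ≤ ε) :
    |Real.log ((a / q) / ((a + a') / (q + q')))| ≤ ε := by
  have hε : 0 ≤ ε := le_trans (abs_nonneg _) h1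
  have hd1 : (a / q) / (a' / q') = a * q' / (q * a') := by field_simp
  have hd2 : (a' / q') / (a / q) = a' * q / (q' * a) := by field_simp
  have key1 : a * q' ≤ (1 + ε) * (q * a') := by
    have := le_trans (le_abs_self _) h1
    rw [hd1] at this
    have h' : a * q' / (q * a') ≤ 1 + ε := by linarith
    rw [div_le_iff₀ (by positivity)] at h'
    exact h'
  have key2 : a' * q ≤ (1 + ε) * (q' * a) := by
    have := le_trans (le_abs_self _) h2
    rw [hd2] at this
    have h' : a' * q / (q' * a) ≤ 1 + ε := by linarith
    rw [div_le_iff₀ (by positivity)] at h'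
    exact h'
  set r : ℝ := (a / q) / ((a + a') / (q + q')) with hrdef
  have hrval : r = (a * (q + q')) / (q * (a + a')) := by rw [hrdef]; field_simp
  have hrpos : 0 < r := by rw [hrval]; positivity
  have hrle : r ≤ 1 + ε := by
    rw [hrval, div_le_iff₀ (by positivity)]
    nlinarith [mul_nonneg hε (mul_pos hq ha).le, key1]
  have hrinvle : r⁻¹ ≤ 1 + ε := by
    rw [hrval, ← one_div, one_div_div, div_le_iff₀ (by positivity)]
    nlinarith [mul_nonneg hε (mul_pos hq ha).le, key2]
  rw [abs_le]
  constructor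
  · have := Real.log_le_sub_one_of_pos (inv_pos.mpr hrpos)
    rw [Real.log_inv] at this
    linarith
  · have := Real.log_le_sub_one_of_pos hrpos
    linarith

/-- **Classical MCMI decay from complete analyticity (single-site case).** Let `μ` be a
finite-volume Gibbs measure of a classical spin system on `Λ` (with full support), and let
`C = {x₀}` be a single site.  If the system is completely analytic with constants `K, ξ` —
expressed, via the identification of finite-volume Gibbs marginals with conditional
distributions, as the bound on the ratio of the conditional distributions of `A` given `C ∪ D`
under a single spin flip at `x₀` — then for any partition `Λ = A ⊔ B ⊔ C ⊔ D`,
`‖log(μ_{A|CD}/μ_{A|D})‖_∞ ≤ K·e^{−dist(A,C)/ξ}`. -/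
theorem stmt17 (dst : Λ → Λ → ℝ) (μ : (Λ → Bool) → ℝ)
    (hμpos : ∀ ω, 0 < μ ω) (hμ1 : ∑ ω, μ ω = 1)
    (K ξ : ℝ) (hK : 0 ≤ K) (hξ : 0 < ξ)
    (A B C D : Finset Λ) (x₀ : Λ) (hC : C = {x₀})
    (hpart : A ∪ B ∪ C ∪ D = Finset.univ)
    (hAB : Disjoint A B) (hAC : Disjoint A C) (hAD : Disjoint A D)
    (hBC : Disjoint B C) (hBD : Disjoint B D) (hCD : Disjoint C D)
    (hCA : ∀ η η' : Λ → Bool, (∀ k, k ≠ x₀ → η k = η' k) →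
      |condP A (C ∪ D) μ η / condP A (C ∪ D) μ η' - 1|
        ≤ K * Real.exp (-(fdistC dst A C / ξ))) :
    ∀ η : Λ → Bool,
      |Real.log (condP A (C ∪ D) μ η / condP A D μ η)|
        ≤ K * Real.exp (-(fdistC dst A C / ξ)) := by
  intro η
  set ε := K * Real.exp (-(fdistC dst A C / ξ)) with hε
  set η' : Λ → Bool := Function.update η x₀ (!η x₀) with hη'
  have hdiff : ∀ k, k ≠ x₀ → η k = η' k := fun k hk =>
    (Function.update_of_ne hk _ _).symm
  have hdiff' : ∀ k, k ≠ x₀ → η' k = η k := fun k hk => (hdiff k hk).symm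
  have hx₀A : x₀ ∉ A := by
    have := hAC
    rw [hC, Finset.disjoint_singleton_right] at this
    exact this
  have hx₀D : x₀ ∉ D := by
    have := hCD
    rw [hC, Finset.disjoint_singleton_left] at this
    exact this
  have hx₀AD : x₀ ∉ A ∪ D := by
    simp [Finset.mem_union, hx₀A, hx₀D]
  have hsetCD : C ∪ D = insert x₀ D := by
    rw [hC]; ext k; simp
  have hsetACD : A ∪ (C ∪ D) = insert x₀ (A ∪ D) := by
    rw [hC]; ext k; simp
  set a := margP (insert x₀ (A ∪ D)) μ η with ha_def
  set a' := margP (insert x₀ (A ∪ D)) μ η' with ha'_def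
  set q := margP (insert x₀ D) μ η with hq_def
  set q' := margP (insert x₀ D) μ η' with hq'_def
  have ha : 0 < a := margP_pos _ _ hμpos _
  have ha' : 0 < a' := margP_pos _ _ hμpos _
  have hq : 0 < q := margP_pos _ _ hμpos _
  have hq' : 0 < q' := margP_pos _ _ hμpos _
  have hcond1 : condP A (C ∪ D) μ η = a / q := by
    unfold condP
    rw [hsetACD, hsetCD]
  have hcond2 : condP A (C ∪ D) μ η' = a' / q' := by
    unfold condP
    rw [hsetACD, hsetCD]
  have hcond3 : condP A D μ η = (a + a') / (q + q') := by
    unfold condP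
    rw [margP_split (A ∪ D) μ x₀ hx₀AD η, margP_split D μ x₀ hx₀D η]
  have h1 := hCA η η' hdiff
  have h2 := hCA η' η hdiff'
  rw [hcond1, hcond2] at h1
  rw [hcond1, hcond2] at h2
  rw [hcond1, hcond3]
  exact core a a' q q' ε ha ha' hq hq' h1 h2

end Paper
end
end
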